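/- The language { w ∈ {0,1}⁺ : w(0) = w(|w|−1) } (first symbol equals last symbol) is accepted by a shrinking cellular automaton in O(1) time, but is not accepted by any (non-shrinking) cellular automaton in o(n) time. -/

import Mathlib

/-- A shrinking cellular automaton over input alphabet `α`. -/
structure SCA (α : Type) where
  Q : Type
  fintypeQ : Fintype Q
  decEq : DecidableEq Q
  δ : Q → Q → Q → Q
  q : Q
  del : Q
  embed : α → Q
  accept : Q → Bool
  del_ne_q : del ≠ q
  inactive : ∀ a b, δ a q b = q
  embed_ne_q : ∀ x, embed x ≠ q

namespace SCA
variable {α : Type} (S : SCA α)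

/-- One application of the local rule to every cell (boundary cells see the
inactive state). -/
def raw (w : List S.Q) : List S.Q :=
  (List.range w.length).map fun i =>
    S.δ (if i = 0 then S.q else w.getD (i - 1) S.q) (w.getD i S.q) (w.getD (i + 1) S.q)

/-- The shrinking global transition: apply the local rule, then delete all
cells in the delete state. -/
def step (w : List S.Q) : List S.Q :=
  haveI := S.decEq
  (S.raw w).filter (fun c => decide (c ≠ S.del))

/-- Configuration reached from input `w` after `t` shrinking transitions. -/
def conf (w : List α) (t : ℕ) : List S.Q := S.step^[t] (w.map S.embed)

/-- `S` accepts `w` at step `t`: the leftmost active cell is accepting. -/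
def AcceptsAt (w : List α) (t : ℕ) : Prop :=
  haveI := S.decEq
  ∃ a, ((S.conf w t).dropWhile (fun c => decide (c = S.q))).head? = some a ∧
    S.accept a = true

/-- The language accepted by `S`. -/
def Lang : Set (List α) := {w | ∃ t, S.AcceptsAt w t}

end SCA

/-- `L ∈ SCA[O(T)]`. -/
def InSCA {α : Type} (L : Set (List α)) (T : ℕ → ℕ) : Prop :=
  ∃ (S : SCA α) (C : ℕ), S.Lang = L ∧
    ∀ w ∈ L, ∃ t ≤ C * T w.length + C, S.AcceptsAt w t

/-- `L ∈ SCA[o(n)]`. -/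
def InSCAo {α : Type} (L : Set (List α)) : Prop :=
  ∃ (S : SCA α) (T : ℕ → ℕ), S.Lang = L ∧
    (∀ w ∈ L, ∃ t ≤ T w.length, S.AcceptsAt w t) ∧
    (∀ ε : ℝ, 0 < ε → ∀ᶠ n in Filter.atTop, (T n : ℝ) ≤ ε * n)
/-- A (non-shrinking) bounded one-dimensional cellular automaton. -/
structure CA (α : Type) where
  Q : Type
  fintypeQ : Fintype Q
  decEq : DecidableEq Q
  δ : Q → Q → Q → Q
  q : Q
  embed : α → Q
  accept : Q → Bool
  inactive : ∀ a b, δ a q b = q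
  embed_ne_q : ∀ x, embed x ≠ q

namespace CA
variable {α : Type} (A : CA α)

/-- The global transition function (boundary cells see the inactive state). -/
def step (w : List A.Q) : List A.Q :=
  (List.range w.length).map fun i =>
    A.δ (if i = 0 then A.q else w.getD (i - 1) A.q) (w.getD i A.q) (w.getD (i + 1) A.q)

def conf (w : List α) (t : ℕ) : List A.Q := A.step^[t] (w.map A.embed)

/-- Acceptance is signaled by cell zero. -/
def AcceptsAt (w : List α) (t : ℕ) : Prop :=
  ∃ a, (A.conf w t).head? = some a ∧ A.accept a = true

def Lang : Set (List α) := {w | ∃ t, A.AcceptsAt w t}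

end CA

/-- `L ∈ CA[o(n)]`. -/
def InCAo {α : Type} (L : Set (List α)) : Prop :=
  ∃ (A : CA α) (T : ℕ → ℕ), A.Lang = L ∧
    (∀ w ∈ L, ∃ t ≤ T w.length, A.AcceptsAt w t) ∧
    (∀ ε : ℝ, 0 < ε → ∀ᶠ n in Filter.atTop, (T n : ℝ) ≤ ε * n)

/-- Words whose first symbol equals their last symbol. -/
def FL : Set (List Bool) := {w | w ≠ [] ∧ w.head? = w.getLast?}

inductive St where
  | q | del | s (b : Bool) | F (b : Bool) | L (b : Bool) | acc | rej
deriving DecidableEq, Fintype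

def rule : St → St → St → St
  | _, .q, _ => .q
  | l, .s b, r => if l = .q then (if r = .q then .acc else .F b)
                  else (if r = .q then .L b else .del)
  | _, .F b, r => match r with | .L c => if b = c then .acc else .rej | _ => .rej
  | _, .L _, _ => .del
  | _, .acc, _ => .acc
  | _, .rej, _ => .rej
  | _, .del, _ => .del

def mySCA : SCA Bool where
  Q := St
  fintypeQ := inferInstance
  decEq := inferInstance
  δ := rule
  q := .q
  del := .del
  embed := fun b => .s b
  accept := fun c => match c with | .acc => true | _ => false
  del_ne_q := by decide
  inactive := by intro a b; cases a <;> cases b <;> rfl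
  embed_ne_q := by decide

lemma emb_getD (u : List Bool) (j : ℕ) (hj : j < u.length) :
    (u.map mySCA.embed).getD j mySCA.q = St.s u[j] := by
  rw [List.getD_eq_getElem _ _ (by simpa using hj)]
  simp [mySCA]

lemma rule_mid (a x c : Bool) : rule (.s a) (.s x) (.s c) = .del := rfl
lemma rule_first (x b : Bool) : rule .q (.s x) (.s b) = .F x := rfl
lemma rule_last (a y : Bool) : rule (.s a) (.s y) .q = .L y := rfl

lemma raw_long (x y : Bool) (l : List Bool) :
    mySCA.raw (((x :: l) ++ [y]).map mySCA.embed)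
      = St.F x :: (l.map fun _ => St.del) ++ [St.L y] := by
  apply List.ext_getElem
  · simp [SCA.raw]
    have : (St.F x :: (List.replicate l.length St.del ++ [St.L y]) : List St).length
        = l.length + 1 + 1 := by simp
    exact this.symm
  intro i h1 h2
  set u := (x :: l) ++ [y] with hu
  have hul : u.length = l.length + 2 := by simp [hu]
  have hi : i < l.length + 2 := by simpa [SCA.raw, hul] using h1
  have hraw : (mySCA.raw (u.map mySCA.embed))[i]
      = rule (if i = 0 then St.q else (u.map mySCA.embed).getD (i-1) mySCA.q)
          ((u.map mySCA.embed).getD i mySCA.q)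
          ((u.map mySCA.embed).getD (i+1) mySCA.q) := by
    simp [SCA.raw, mySCA]
  rw [hraw]
  by_cases h0 : i = 0
  · subst h0
    have e0 : (u.map mySCA.embed).getD 0 mySCA.q = St.s x := by
      rw [emb_getD u 0 (by omega)]; simp [hu]; rfl
    have e1 : (u.map mySCA.embed).getD 1 mySCA.q = St.s (u[1]'(by omega)) :=
      emb_getD u 1 (by omega)
    simp only [↓reduceIte]
    rw [e0, e1, rule_first]
    rfl
  · obtain ⟨j, rfl⟩ := Nat.exists_eq_succ_of_ne_zero h0
    simp only [Nat.succ_eq_add_one, Nat.add_sub_cancel] at h0 h2 hi ⊢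
    by_cases hlast : j = l.length
    · subst hlast
      have e1 : (u.map mySCA.embed).getD l.length mySCA.q = St.s (u[l.length]'(by omega)) :=
        emb_getD u l.length (by omega)
      have e2 : (u.map mySCA.embed).getD (l.length + 1) mySCA.q = St.s y := by
        rw [emb_getD u (l.length+1) (by omega)]
        congr 1
        have : u[l.length + 1]'(by omega) = u.getLast (by simp [hu]) := by
          rw [List.getLast_eq_getElem]; congr 1; omega
        rw [this]; simp [hu]
      have e3 : (u.map mySCA.embed).getD (l.length + 1 + 1) mySCA.q = mySCA.q :=
        List.getD_eq_default _ _ (by simp [hul])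
      rw [e1, e2, e3]
      show rule (St.s _) (St.s y) St.q = _
      rw [rule_last]
      symm
      simp
      exact (by simp [List.getElem_append] : (St.F x :: (List.replicate l.length St.del ++ [St.L y]) : List St)[l.length + 1]'(by simp) = St.L y)
    · -- middle: 1 ≤ j+1 ≤ l.length
      have hj : j < l.length := by omega
      have e0 : (u.map mySCA.embed).getD j mySCA.q = St.s (u[j]'(by omega)) :=
        emb_getD u j (by omega)
      have e1 : (u.map mySCA.embed).getD (j+1) mySCA.q = St.s (u[j+1]'(by omega)) :=
        emb_getD u (j+1) (by omega)
      have e2 : (u.map mySCA.embed).getD (j+1+1) mySCA.q = St.s (u[j+2]'(by omega)) :=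
        emb_getD u (j+2) (by omega)
      rw [e0, e1, e2]
      show rule (St.s _) (St.s _) (St.s _) = _
      rw [rule_mid]
      symm
      show (St.F x :: (List.map (fun _ => St.del) l ++ [St.L y]) : List St)[j+1]'(by simp; omega)
        = St.del
      simp only [List.getElem_cons_succ]
      rw [List.getElem_append_left (by simpa using hj)]
      simp

lemma step_long (x y : Bool) (l : List Bool) :
    mySCA.step (((x :: l) ++ [y]).map mySCA.embed) = [St.F x, St.L y] := by
  rw [SCA.step, raw_long]
  induction l with
  | nil => rfl
  | cons a l ih =>
      rw [show ((a :: l).map fun _ => St.del) = St.del :: (l.map fun _ => St.del) from rfl] at *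
      exact ih


lemma conf_succ' (w : List Bool) (t : ℕ) :
    mySCA.conf w (t+1) = mySCA.step (mySCA.conf w t) := by
  rw [SCA.conf, Function.iterate_succ_apply']; rfl

lemma conf_nil (t : ℕ) : mySCA.conf ([] : List Bool) t = [] := by
  induction t with
  | zero => rfl
  | succ t ih => rw [conf_succ', ih]; rfl

lemma conf_single (x : Bool) (t : ℕ) : mySCA.conf [x] (t+1) = [St.acc] := by
  induction t with
  | zero =>
      rw [conf_succ']
      show mySCA.step [St.s x] = _
      cases x <;> rfl
  | succ t ih => rw [conf_succ', ih]; rfl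

lemma conf_one (x y : Bool) (l : List Bool) :
    mySCA.conf ((x :: l) ++ [y]) 1 = [St.F x, St.L y] := by
  rw [conf_succ']
  exact step_long x y l

lemma conf_two (x y : Bool) (l : List Bool) (t : ℕ) :
    mySCA.conf ((x :: l) ++ [y]) (t+2) = [if x = y then St.acc else St.rej] := by
  induction t with
  | zero =>
      rw [conf_succ', conf_one]
      cases x <;> cases y <;> rfl
  | succ t ih =>
      rw [conf_succ', ih]
      by_cases h : x = y <;> simp [h] <;> rfl

lemma accepts_of_conf_acc (w : List Bool) (t : ℕ) (h : mySCA.conf w t = [St.acc]) :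
    mySCA.AcceptsAt w t := by
  refine ⟨St.acc, ?_, rfl⟩
  rw [h]
  rfl

lemma not_accepts (w : List Bool) (t : ℕ) (c : St) (r : List St)
    (h : mySCA.conf w t = c :: r) (hq : c ≠ St.q) (ha : mySCA.accept c = false) :
    ¬ mySCA.AcceptsAt w t := by
  rintro ⟨a, ha', hacc⟩
  rw [h] at ha'
  have : a = c := by simp [List.dropWhile_cons, mySCA, hq] at ha'; exact (Option.some.inj ha').symm
  rw [this, ha] at hacc
  exact Bool.false_ne_true hacc

lemma mem_accept (w : List Bool) (hw : w ∈ FL) : ∃ t ≤ 2, mySCA.AcceptsAt w t := by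
  obtain ⟨hne, hfl⟩ := hw
  rcases w with _ | ⟨x, rest⟩
  · exact absurd rfl hne
  rcases List.eq_nil_or_concat rest with rfl | ⟨l, y, rfl⟩
  · exact ⟨1, by omega, accepts_of_conf_acc _ 1 (conf_single x 0)⟩
  · simp only [List.concat_eq_append] at hne hfl ⊢
    have hx : x = y := by
      have h1 : (x :: (l ++ [y])).head? = some x := rfl
      have h2 : (x :: (l ++ [y])).getLast? = some y := by
        show ((x :: l) ++ [y]).getLast? = some y
        exact List.getLast?_concat
      rw [h1, h2] at hfl
      exact Option.some.inj hfl
    refine ⟨2, by omega, accepts_of_conf_acc _ 2 ?_⟩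
    have := conf_two x y l 0
    rw [if_pos hx] at this
    exact this

lemma lang_eq : mySCA.Lang = FL := by
  ext w
  constructor
  · rintro ⟨t, ht⟩
    rcases w with _ | ⟨x, rest⟩
    · exfalso
      obtain ⟨a, ha, _⟩ := ht
      rw [show mySCA.conf [] t = [] from conf_nil t] at ha
      simp [List.dropWhile] at ha
    rcases List.eq_nil_or_concat rest with rfl | ⟨l, y, rfl⟩
    · exact ⟨by simp, rfl⟩
    · simp only [List.concat_eq_append] at ht ⊢
      by_cases hxy : x = y
      · subst hxy
        refine ⟨by simp, ?_⟩
        have h2 : (x :: (l ++ [x])).getLast? = some x := by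
          show ((x :: l) ++ [x]).getLast? = some x
          exact List.getLast?_concat
        rw [h2]
        rfl
      · exfalso
        rcases t with _ | t
        · exact not_accepts (x :: (l ++ [y])) 0 (St.s x) ((l ++ [y]).map mySCA.embed) rfl (by simp) rfl ht
        rcases t with _ | t
        · exact not_accepts _ 1 (St.F x) [St.L y] (conf_one x y l) (by simp) rfl ht
        · refine not_accepts _ (t+2) St.rej [] ?_ (by simp) rfl ht
          have := conf_two x y l t
          rw [if_neg hxy] at this
          exact this
  · intro hw
    obtain ⟨t, _, ht⟩ := mem_accept w hw
    exact ⟨t, ht⟩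

section CAlemmas
variable {α : Type} (A : CA α)

lemma CA.length_step (u : List A.Q) : (A.step u).length = u.length := by simp [CA.step]

lemma CA.conf_succ (w : List α) (t : ℕ) : A.conf w (t+1) = A.step (A.conf w t) := by
  rw [CA.conf, Function.iterate_succ_apply']; rfl

lemma CA.length_conf (w : List α) (t : ℕ) : (A.conf w t).length = w.length := by
  induction t with
  | zero => simp [CA.conf]
  | succ t ih => rw [CA.conf_succ, CA.length_step, ih]

lemma CA.step_getD (u : List A.Q) (j : ℕ) :
    (A.step u).getD j A.q
      = A.δ (if j = 0 then A.q else u.getD (j-1) A.q) (u.getD j A.q) (u.getD (j+1) A.q) := by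
  by_cases hj : j < u.length
  · rw [List.getD_eq_getElem _ _ (by rw [A.length_step]; exact hj)]
    simp [CA.step]
  · have hmid : u.getD j A.q = A.q := List.getD_eq_default _ _ (by omega)
    rw [List.getD_eq_default _ _ (by rw [A.length_step]; omega), hmid, A.inactive]

lemma CA.conf_agree : ∀ (t m : ℕ) (w₁ w₂ : List α),
    (∀ j ≤ t + m, (w₁.map A.embed).getD j A.q = (w₂.map A.embed).getD j A.q) →
    ∀ j ≤ m, (A.conf w₁ t).getD j A.q = (A.conf w₂ t).getD j A.q := by
  intro t
  induction t with
  | zero => intro m w₁ w₂ h j hj; exact h j (by omega)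
  | succ t ih =>
      intro m w₁ w₂ h j hj
      have h' := ih (m+1) w₁ w₂ (fun j hj => h j (by omega))
      rw [CA.conf_succ, CA.conf_succ, CA.step_getD, CA.step_getD,
        h' j (by omega), h' (j+1) (by omega)]
      by_cases h0 : j = 0
      · rw [if_pos h0, if_pos h0]
      · rw [if_neg h0, if_neg h0, h' (j-1) (by omega)]

end CAlemmas

lemma getD_wb {α : Type} (A : CA α) (a b : α) (m j : ℕ) (hj : j ≤ m) :
    ((a :: (List.replicate m a ++ [b])).map A.embed).getD j A.q = A.embed a := by
  rw [List.getD_eq_getElem _ _ (by simp; omega), List.getElem_map]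
  congr 1
  rcases j with _ | j
  · rfl
  · simp only [List.getElem_cons_succ]
    rw [List.getElem_append_left (by simp; omega)]
    simp

lemma head?_eq_getD {β : Type} (l : List β) (d : β) (h : l ≠ []) :
    l.head? = some (l.getD 0 d) := by
  cases l with
  | nil => exact absurd rfl h
  | cons a l => rfl

theorem not_InCAo_FL : ¬ InCAo FL := by
  rintro ⟨A, T, hLang, hAcc, hT⟩
  obtain ⟨N, hN⟩ := Filter.eventually_atTop.mp (hT (1/2) (by norm_num))
  set n := max N 4 with hn
  have hn4 : 4 ≤ n := le_max_right _ _
  have hTn : (T n : ℝ) ≤ 1/2 * n := hN n (le_max_left _ _)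
  have hTn' : T n ≤ n - 2 := by
    have h4 : (4 : ℝ) ≤ (n : ℝ) := by exact_mod_cast hn4
    have : (T n : ℝ) ≤ ((n - 2 : ℕ) : ℝ) := by
      rw [Nat.cast_sub (by omega)]
      push_cast
      linarith
    exact_mod_cast this
  set m := n - 2 with hm
  set w : Bool → List Bool := fun b => true :: (List.replicate m true ++ [b]) with hw
  have hlen : ∀ b, (w b).length = n := by intro b; simp [hw, hm]; omega
  have hgetLast : ∀ b, (w b).getLast? = some b := by
    intro b
    show ((true :: List.replicate m true) ++ [b]).getLast? = some b
    exact List.getLast?_concat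
  have hmem : w true ∈ FL := by
    refine ⟨by simp [hw], ?_⟩
    rw [hgetLast true]; rfl
  obtain ⟨t, htle, a, hha, hacc⟩ := hAcc (w true) hmem
  rw [hlen true] at htle
  have htm : t ≤ m := by omega
  have hagree : (A.conf (w true) t).getD 0 A.q = (A.conf (w false) t).getD 0 A.q := by
    refine A.conf_agree t 0 (w true) (w false) ?_ 0 (le_refl 0)
    intro j hj
    rw [getD_wb A true true m j (by omega), getD_wb A true false m j (by omega)]
  have hne1 : A.conf (w true) t ≠ [] := by
    intro h
    have := A.length_conf (w true) t
    rw [h, hlen true] at this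
    simp at this
    omega
  have hne2 : A.conf (w false) t ≠ [] := by
    intro h
    have := A.length_conf (w false) t
    rw [h, hlen false] at this
    simp at this
    omega
  rw [head?_eq_getD _ A.q hne1] at hha
  have ha' : (A.conf (w false) t).getD 0 A.q = a := by
    rw [← hagree]; exact Option.some.inj hha
  have hacc2 : A.AcceptsAt (w false) t := by
    refine ⟨a, ?_, hacc⟩
    rw [head?_eq_getD _ A.q hne2, ha']
  have : w false ∈ FL := by rw [← hLang]; exact ⟨t, hacc2⟩
  have hfalse := this.2
  rw [hgetLast false] at hfalse
  simp [hw] at hfalse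


/-- `FL` is accepted by an SCA in `O(1)` time, but by no (non-shrinking) CA
in `o(n)` time. -/
theorem first_eq_last_sca_not_ca :
    (∃ (S : SCA Bool) (C : ℕ), S.Lang = FL ∧
      ∀ w ∈ FL, ∃ t ≤ C, S.AcceptsAt w t) ∧
    ¬ InCAo FL := by
  constructor
  · exact ⟨mySCA, 2, lang_eq, fun w hw => mem_accept w hw⟩
  · exact not_InCAo_FL
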